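/- Let G be a finite directed graph with n vertices and let s and v be two distinct vertices of G. There exists an arborescence T of G rooted at s containing v such that the unique path in T from s to v has length exactly n − 1 if and only if G contains a Hamiltonian path from s to v, i.e. a path from s to v that visits every vertex of G exactly once. (This equivalence is the core of the reduction from the Hamiltonian path problem showing that deciding the existence of a perfect consistent tree is NP-complete.) -/

import Mathlib

/-- `IsWalk E u v l`: the nonempty list `l` of vertices is a walk from `u` to `v`
along the edge relation `E` (consecutive vertices are joined by an edge). -/
def IsWalk {V : Type*} (E : V → V → Prop) (u v : V) (l : List V) : Prop :=
  l.head? = some u ∧ l.getLast? = some v ∧ l.Chain' E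

/-- The length (number of edges) of a walk given by its list of vertices. -/
def wlen {V : Type*} (l : List V) : ℕ := l.length - 1

/-- `v` is reachable from `u` along the edge relation `E`. -/
def Reach {V : Type*} (E : V → V → Prop) (u v : V) : Prop := ∃ l, IsWalk E u v l

/-- The distance from `u` to `v`: the minimum length of a walk from `u` to `v`
(equal to `0` by convention when `v` is not reachable from `u`). -/
noncomputable def gdist {V : Type*} (E : V → V → Prop) (u v : V) : ℕ :=
  sInf {n | ∃ l, IsWalk E u v l ∧ wlen l = n}

/-- An arborescence of the graph with edge relation `E`, rooted at `s`:
a subgraph (given by its vertex set and edge relation) containing `s`,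
in which every vertex is joined from `s` by a unique path. -/
structure Arb {V : Type*} (E : V → V → Prop) (s : V) where
  verts : Set V
  edges : V → V → Prop
  edges_sub : ∀ u v, edges u v → E u v
  edges_mem : ∀ u v, edges u v → u ∈ verts ∧ v ∈ verts
  root_mem : s ∈ verts
  unique_walk : ∀ v ∈ verts, ∃! l, IsWalk edges s v l

lemma walk_ne_nil {V : Type*} {R : V → V → Prop} {s u : V} {l : List V}
    (h : IsWalk R s u l) : l ≠ [] := by
  rintro rfl; simp [IsWalk] at h

lemma walk_concat_cases {V : Type*} {R : V → V → Prop} {s u : V} {l : List V}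
    (h : IsWalk R s u l) :
    (l = [u] ∧ s = u) ∨ ∃ p l', l' ≠ [] ∧ l = l' ++ [u] ∧ IsWalk R s p l' ∧ R p u := by
  obtain ⟨h1, h2, h3⟩ := h
  rcases List.eq_nil_or_concat l with rfl | ⟨L, b, rfl⟩
  · simp at h1
  simp only [List.concat_eq_append] at *
  rw [List.getLast?_concat] at h2
  obtain rfl : b = u := by simpa using h2
  by_cases hL : L = []
  · subst hL; left; simp at h1 ⊢; exact h1.symm
  right
  change List.IsChain R _ at h3; rw [List.isChain_append] at h3
  have hlast : L.getLast? = some (L.getLast hL) := List.getLast?_eq_getLast hL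
  refine ⟨L.getLast hL, L, hL, rfl, ⟨?_, hlast, h3.1⟩, h3.2.2 _ hlast _ rfl⟩
  rw [List.head?_append] at h1
  cases hh : L.head? with
  | none => exact absurd (List.head?_eq_none_iff.mp hh) hL
  | some x => rw [hh] at h1; simpa [hh] using h1

lemma walk_unique {V : Type*} {R : V → V → Prop} {s : V}
    (h0 : ∀ x, ¬ R x s) (h1 : ∀ a b c, R a c → R b c → a = b) (l₁ : List V) :
    ∀ u l₂, IsWalk R s u l₁ → IsWalk R s u l₂ → l₁ = l₂ := by
  induction l₁ using List.reverseRecOn with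
  | nil => intro u l₂ hw1 _; exact absurd rfl (walk_ne_nil hw1)
  | append_singleton l a ih =>
    intro u l₂ hw1 hw2
    obtain rfl : a = u := by
      have := hw1.2.1; rwa [List.getLast?_concat, Option.some_inj] at this
    rcases walk_concat_cases hw1 with ⟨he, rfl⟩ | ⟨p, l', hne, heq, hwp, hpu⟩
    · obtain rfl : l = [] := by
        have := congrArg List.length he; simpa using this
      rcases walk_concat_cases hw2 with ⟨he2, _⟩ | ⟨q, l₂', _, _, _, hqu⟩
      · simp [he2]
      · exact absurd hqu (h0 q)
    · obtain rfl : l = l' := List.append_cancel_right heq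
      rcases walk_concat_cases hw2 with ⟨he2, rfl⟩ | ⟨q, l₂', _, heq2, hwq, hqu⟩
      · exact absurd hpu (h0 p)
      · obtain rfl : p = q := h1 p q _ hpu hqu
        rw [heq2, ih p l₂' hwp hwq]

lemma walk_splice {V : Type*} {R : V → V → Prop} {s u : V} {l : List V}
    (h : IsWalk R s u l) {i j : ℕ} (hij : i < j) (hj : j < l.length)
    (hdup : l[i]'(lt_trans hij hj) = l[j]) :
    IsWalk R s u (l.take (i+1) ++ l.drop (j+1)) ∧
      (l.take (i+1) ++ l.drop (j+1)).length < l.length := by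
  obtain ⟨h1, h2, h3⟩ := h
  have hi : i < l.length := lt_trans hij hj
  constructor
  · refine ⟨?_, ?_, ?_⟩
    · rw [List.head?_append, List.head?_take]
      simp [h1]
    · rw [List.getLast?_append, List.getLast?_drop]
      by_cases hc : l.length ≤ j + 1
      · have hj1 : j = l.length - 1 := by omega
        rw [if_pos hc, List.getLast?_take, if_neg (by omega)]
        simp only [Nat.add_sub_cancel]
        rw [List.getElem?_eq_getElem hi, hdup]
        rw [List.getLast?_eq_getElem?] at h2
        rw [← hj1] at h2
        rw [List.getElem?_eq_getElem hj] at h2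
        simpa using h2
      · rw [if_neg hc, h2]; simp
    · change List.IsChain R l at h3; change List.IsChain R _; rw [List.isChain_append]
      refine ⟨h3.take _, h3.drop _, ?_⟩
      intro x hx y hy
      rw [List.getLast?_take, if_neg (by omega)] at hx
      simp only [Nat.add_sub_cancel, List.getElem?_eq_getElem hi] at hx
      rw [List.head?_drop] at hy
      rcases Nat.lt_or_ge (j+1) l.length with hjl | hjl
      · rw [List.getElem?_eq_getElem hjl] at hy
        simp only [Option.or_some, Option.some_or, Option.mem_def, Option.some_inj] at hx hy
        subst hx; subst hy
        rw [hdup]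
        have := List.isChain_iff_getElem.mp h3 j (by omega)
        simpa using this
      · rw [List.getElem?_eq_none (by omega)] at hy
        simp at hy
  · have : (l.take (i+1)).length = i + 1 := by
      rw [List.length_take]; omega
    rw [List.length_append, this, List.length_drop]; omega

lemma walk_take {V : Type*} {R : V → V → Prop} {s : V} {l : List V}
    (h1 : l.head? = some s) (h3 : l.Chain' R) {i : ℕ} (hi : i < l.length) :
    IsWalk R s (l[i]) (l.take (i+1)) := by
  refine ⟨?_, ?_, h3.take _⟩
  · rw [List.head?_take, if_neg (by omega)]; exact h1
  · rw [List.getLast?_take, if_neg (by omega)]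
    simp [List.getElem?_eq_getElem hi]

/-- Core of the reduction from the Hamiltonian path problem for perfect consistent
trees: for distinct vertices `s` and `v` of a graph with `n` vertices, there is an
arborescence rooted at `s` containing `v` in which the unique path from `s` to `v`
has length exactly `n - 1` iff the graph contains a Hamiltonian path from `s` to
`v` (a path visiting every vertex exactly once). -/
theorem stmt_8 {V : Type*} [Fintype V] (E : V → V → Prop) (s v : V) (hsv : s ≠ v) :
    (∃ T : Arb E s, v ∈ T.verts ∧
        ∀ l, IsWalk T.edges s v l → wlen l = Fintype.card V - 1) ↔
      ∃ l, IsWalk E s v l ∧ l.Nodup ∧ ∀ u : V, u ∈ l := by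
  classical
  have hcard : 1 ≤ Fintype.card V := Fintype.card_pos_iff.mpr ⟨s⟩
  constructor
  · rintro ⟨T, hv, hlen⟩
    obtain ⟨l, hl, huniq⟩ := T.unique_walk v hv
    have hlpos : 0 < l.length := List.length_pos_iff.mpr (walk_ne_nil hl)
    have hlength : l.length = Fintype.card V := by
      have := hlen l hl; unfold wlen at this; omega
    have hnd : l.Nodup := by
      by_contra hnd
      obtain ⟨x, hx⟩ := List.exists_duplicate_iff_not_nodup.mpr hnd
      obtain ⟨n, m, hnm, hxn, hxm⟩ := List.duplicate_iff_exists_distinct_get.mp hx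
      have hdup : l[(n : ℕ)]'n.2 = l[(m : ℕ)]'m.2 := by
        simp only [← List.get_eq_getElem, ← hxn, ← hxm]
      obtain ⟨hw', hlt'⟩ := walk_splice hl hnm m.2 hdup
      have h1 := hlen _ hw'
      have h2 : 0 < (l.take ((n : ℕ)+1) ++ l.drop ((m : ℕ)+1)).length :=
        List.length_pos_iff.mpr (walk_ne_nil hw')
      unfold wlen at h1
      omega
    refine ⟨l, ⟨hl.1, hl.2.1, hl.2.2.imp fun a b h => T.edges_sub a b h⟩, hnd, ?_⟩
    intro u
    have ht : l.toFinset = Finset.univ := by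
      apply Finset.eq_univ_of_card
      rw [List.toFinset_card_of_nodup hnd, hlength]
    exact List.mem_toFinset.mp (ht ▸ Finset.mem_univ u)
  · rintro ⟨l, ⟨hh, hla, hch⟩, hnd, hcov⟩
    set R : V → V → Prop := fun a b =>
      ∃ (i : ℕ) (h : i + 1 < l.length), l[i]'(by omega) = a ∧ l[i+1] = b with hR
    have hs0 : l.head? = some s := hh
    have hl0 : 0 < l.length := by
      rcases l with _ | _; · simp at hh
      · simp
    have hls : l[0] = s := by
      rw [List.head?_eq_getElem?, List.getElem?_eq_getElem hl0] at hs0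
      simpa using hs0
    have hRsub : ∀ a b, R a b → E a b := by
      rintro a b ⟨i, hi, rfl, rfl⟩
      have := List.isChain_iff_getElem.mp hch i (by omega)
      simpa using this
    have h0 : ∀ x, ¬ R x s := by
      rintro x ⟨i, hi, _, hxs⟩
      have : i + 1 = 0 := by
        rw [← hnd.getElem_inj_iff (hi := hi) (hj := hl0)]
        rw [hxs, hls]
      omega
    have h1 : ∀ a b c, R a c → R b c → a = b := by
      rintro a b c ⟨i, hi, rfl, hic⟩ ⟨j, hj, rfl, hjc⟩
      have : i + 1 = j + 1 := by
        rw [← hnd.getElem_inj_iff (hi := hi) (hj := hj), hic, hjc]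
      obtain rfl : i = j := by omega
      rfl
    have hchR : l.Chain' R := by
      change List.IsChain R l; rw [List.isChain_iff_getElem]
      intro i hi
      exact ⟨i, by omega, by simp, by simp⟩
    have hwalkR : IsWalk R s v l := ⟨hh, hla, hchR⟩
    have hlength : l.length = Fintype.card V := by
      have ht : l.toFinset = Finset.univ :=
        Finset.eq_univ_iff_forall.mpr fun u => List.mem_toFinset.mpr (hcov u)
      rw [← List.toFinset_card_of_nodup hnd, ht, Finset.card_univ]
    refine ⟨⟨Set.univ, R, hRsub, fun _ _ _ => ⟨trivial, trivial⟩, trivial, ?_⟩, trivial, ?_⟩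
    · intro u _
      have hu : u ∈ l := hcov u
      have hi : l.idxOf u < l.length := List.idxOf_lt_length_iff.mpr hu
      refine ⟨l.take (l.idxOf u + 1), ?_, fun y hy => ?_⟩
      · have := walk_take hs0 hchR hi
        rwa [List.getElem_idxOf] at this
      · exact walk_unique h0 h1 y u _ hy (by
          have := walk_take hs0 hchR hi
          rwa [List.getElem_idxOf] at this)
    · intro m hm
      have : m = l := walk_unique h0 h1 m v l hm hwalkR
      subst this
      unfold wlen
      omega
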